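/- For all complex numbers α, β, the operator norm of α·J₃ + β·J₃ᴴ equals √(|α|² + |β|²), where J₃ is the 3×3 Jordan block with zero eigenvalues. -/

import Mathlib

open Matrix
open scoped ComplexOrder

/-- The 3×3 Jordan block with zero eigenvalues. -/
def J₃ : Matrix (Fin 3) (Fin 3) ℂ := !![0, 1, 0; 0, 0, 1; 0, 0, 0]

/-- The operator norm (spectral norm) of a square complex matrix. -/
noncomputable def opNorm {k : ℕ} (A : Matrix (Fin k) (Fin k) ℂ) : ℝ :=
  ‖Matrix.toEuclideanCLM (𝕜 := ℂ) A‖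

lemma apply_eq (α β : ℂ) (x : EuclideanSpace ℂ (Fin 3)) :
    (Matrix.toEuclideanCLM (𝕜 := ℂ) (α • J₃ + β • J₃ᴴ)) x =
      (WithLp.equiv _ _).symm ![α * x 1, β * x 0 + α * x 2, β * x 1] := by
  apply (WithLp.equiv _ _).injective
  rw [WithLp.equiv_apply, Matrix.ofLp_toEuclideanCLM]
  funext i
  fin_cases i <;>
    · simp [J₃, Matrix.toLin'_apply, Matrix.mulVec, dotProduct, Fin.sum_univ_three,
        Matrix.vecHead, Matrix.vecTail]
      try ring

lemma norm_symm (v : Fin 3 → ℂ) :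
    ‖(WithLp.equiv 2 (Fin 3 → ℂ)).symm v‖ = Real.sqrt (‖v 0‖^2 + ‖v 1‖^2 + ‖v 2‖^2) := by
  rw [EuclideanSpace.norm_eq]
  simp [Fin.sum_univ_three, add_assoc]

theorem opNorm_smul_J3_add_smul_J3_conjTranspose (α β : ℂ) :
    opNorm (α • J₃ + β • J₃ᴴ) = Real.sqrt (‖α‖ ^ 2 + ‖β‖ ^ 2) := by
  set s : ℝ := ‖α‖ ^ 2 + ‖β‖ ^ 2 with hs
  have hs0 : 0 ≤ s := by positivity
  set T := Matrix.toEuclideanCLM (𝕜 := ℂ) (α • J₃ + β • J₃ᴴ) with hT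
  have key : ∀ x : EuclideanSpace ℂ (Fin 3),
      ‖T x‖ = Real.sqrt (‖α * x 1‖^2 + ‖β * x 0 + α * x 2‖^2 + ‖β * x 1‖^2) := by
    intro x
    rw [hT, apply_eq α β x, norm_symm]
    simp
  have hxnorm : ∀ x : EuclideanSpace ℂ (Fin 3),
      ‖x‖ = Real.sqrt (‖x 0‖^2 + ‖x 1‖^2 + ‖x 2‖^2) := by
    intro x
    rw [EuclideanSpace.norm_eq]
    simp [Fin.sum_univ_three, add_assoc]
  have upper : ‖T‖ ≤ Real.sqrt s := by
    apply ContinuousLinearMap.opNorm_le_bound _ (Real.sqrt_nonneg s)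
    intro x
    rw [key, hxnorm, ← Real.sqrt_mul hs0]
    apply Real.sqrt_le_sqrt
    have h1 : ‖β * x 0 + α * x 2‖ ≤ ‖β‖ * ‖x 0‖ + ‖α‖ * ‖x 2‖ := by
      calc ‖β * x 0 + α * x 2‖ ≤ ‖β * x 0‖ + ‖α * x 2‖ := norm_add_le _ _
        _ = ‖β‖ * ‖x 0‖ + ‖α‖ * ‖x 2‖ := by rw [norm_mul, norm_mul]
    have h2 : ‖β * x 0 + α * x 2‖^2 ≤ (‖β‖ * ‖x 0‖ + ‖α‖ * ‖x 2‖)^2 := by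
      apply pow_le_pow_left₀ (norm_nonneg _) h1
    have ha := norm_nonneg α; have hb := norm_nonneg β
    have h0 := norm_nonneg (x 0); have h2' := norm_nonneg (x 2)
    rw [norm_mul, norm_mul]
    nlinarith [sq_nonneg (‖α‖ * ‖x 0‖ - ‖β‖ * ‖x 2‖), sq_nonneg (‖x 1‖)]
  have lower : Real.sqrt s ≤ ‖T‖ := by
    rcases eq_or_lt_of_le hs0 with h0 | hpos
    · rw [← h0, Real.sqrt_zero]; exact norm_nonneg T
    · set c : ℝ := Real.sqrt s with hc
      have hcpos : 0 < c := Real.sqrt_pos.mpr hpos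
      set x : EuclideanSpace ℂ (Fin 3) :=
        (WithLp.equiv 2 (Fin 3 → ℂ)).symm ![star β / c, 0, star α / c] with hx
      have hx0 : x 0 = star β / c := rfl
      have hx1 : x 1 = 0 := rfl
      have hx2 : x 2 = star α / c := rfl
      have hnx : ‖x‖ = 1 := by
        rw [hx, norm_symm]
        have : ‖(star β / (c:ℂ) : ℂ)‖^2 + ‖(0:ℂ)‖^2 + ‖(star α / (c:ℂ) : ℂ)‖^2 = 1 := by
          simp only [norm_div, norm_zero, norm_star]
          rw [Complex.norm_real]
          field_simp
          rw [Real.norm_of_nonneg hcpos.le, hc, Real.sq_sqrt hs0, zero_pow two_ne_zero, add_zero, ← add_div,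
            div_eq_one_iff_eq hpos.ne', hs]
          ring
        simp only [Matrix.cons_val_zero, Matrix.cons_val_one, Matrix.head_cons,
          Matrix.cons_val_two, Matrix.tail_cons]
        rw [this, Real.sqrt_one]
      have hTx : ‖T x‖ = c := by
        rw [key]
        have e1 : α * x 1 = 0 := by rw [hx1]; ring
        have e2 : β * x 1 = 0 := by rw [hx1]; ring
        have hnormSq : (Complex.normSq β + Complex.normSq α : ℝ) = s := by
          rw [hs, Complex.normSq_eq_norm_sq, Complex.normSq_eq_norm_sq]
          ring
        have e3 : β * x 0 + α * x 2 = (s / c : ℝ) := by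
          rw [hx0, hx2, mul_div_assoc', mul_div_assoc',
            ← add_div, show (star β : ℂ) = (starRingEnd ℂ) β from rfl,
            show (star α : ℂ) = (starRingEnd ℂ) α from rfl,
            Complex.mul_conj, Complex.mul_conj, ← Complex.ofReal_add, hnormSq]
          push_cast
          ring
        rw [e1, e2, e3]
        simp only [norm_zero]
        rw [Complex.norm_real]
        have : |s / c| = s / c := abs_of_nonneg (by positivity)
        have hsc : (0:ℝ)^2 + (s/c)^2 + (0:ℝ)^2 = (s/c)^2 := by ring
        rw [Real.norm_eq_abs, this, hsc, Real.sqrt_sq (by positivity)]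
        rw [hc, Real.div_sqrt]
      calc c = ‖T x‖ := hTx.symm
        _ ≤ ‖T‖ * ‖x‖ := T.le_opNorm x
        _ = ‖T‖ := by rw [hnx, mul_one]
  exact le_antisymm upper lower
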